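/- Let G be a finite group, Γ = Pow(G), and let v ∈ G be a CC-generator whose order o(v) is not a prime power. Let Γ_v = Γ[N_Γ[v]] and let u ∈ N_Γ[v]. If u = e (the identity) or ⟨u⟩ = ⟨v⟩, then the set of closed-twins of u in Γ_v is exactly {e} together with the generators of ⟨v⟩, i.e. {w ∈ N_Γ[v] : w = e or ⟨w⟩ = ⟨v⟩}. Otherwise, the set of closed-twins of u in Γ_v is exactly the set of generators of ⟨u⟩, i.e. {w ∈ N_Γ[v] : ⟨w⟩ = ⟨u⟩}. -/

import Mathlib

/-- The power graph of a group `G`: distinct `x` and `y` are adjacent iff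
`x ∈ ⟨y⟩` or `y ∈ ⟨x⟩`. -/
def powGraph (G : Type*) [Group G] : SimpleGraph G where
  Adj x y := x ≠ y ∧ (x ∈ Subgroup.zpowers y ∨ y ∈ Subgroup.zpowers x)
  symm := by
    constructor
    rintro x y ⟨hne, h⟩
    exact ⟨hne.symm, h.symm⟩
  loopless := by
    constructor
    rintro x ⟨hne, -⟩
    exact hne rfl

/-- The closed neighborhood of a vertex in a simple graph. -/
def closedNbhd {V : Type*} (X : SimpleGraph V) (v : V) : Set V :=
  insert v (X.neighborSet v)

theorem self_mem_closedNbhd {V : Type*} (X : SimpleGraph V) (v : V) :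
    v ∈ closedNbhd X v := Set.mem_insert v _

/-- `Γ_v`: the subgraph of the power graph induced on the closed neighborhood of `v`. -/
def powLocal (G : Type*) [Group G] (v : G) :
    SimpleGraph (closedNbhd (powGraph G) v) :=
  SimpleGraph.induce (closedNbhd (powGraph G) v) (powGraph G)

/-- `v` is a CC-generator: `⟨v⟩` is not properly contained in any cyclic subgroup,
i.e. `v ∈ ⟨g⟩` implies `⟨g⟩ = ⟨v⟩`. -/
def IsCCGenerator {G : Type*} [Group G] (v : G) : Prop :=
  ∀ g : G, v ∈ Subgroup.zpowers g → Subgroup.zpowers g = Subgroup.zpowers v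


section Arith

lemma aux_exists_other_prime {n p : ℕ} (hn : n ≠ 0) (hp : p.Prime)
    (hnpp : ¬ ∃ q i : ℕ, q.Prime ∧ n = q ^ i) :
    ∃ q : ℕ, q.Prime ∧ q ∣ n ∧ q ≠ p := by
  by_contra h
  push_neg at h
  exact hnpp ⟨p, _, hp,
    Nat.eq_prime_pow_of_unique_prime_dvd hn (fun {d} hd hdn => h d hd hdn)⟩

lemma aux_lt_factorization {e d : ℕ} (he : e ∣ d) (hne : e ≠ d) (hd : d ≠ 0) :
    ∃ p : ℕ, p.Prime ∧ e.factorization p < d.factorization p := by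
  obtain ⟨k, rfl⟩ := he
  have he0 : e ≠ 0 := by rintro rfl; simp at hd
  have hk0 : k ≠ 0 := by rintro rfl; simp at hd
  have hk1 : k ≠ 1 := by rintro rfl; simp at hne
  refine ⟨k.minFac, Nat.minFac_prime hk1, ?_⟩
  rw [Nat.factorization_mul he0 hk0]
  have := (Nat.minFac_prime hk1).factorization_pos_of_dvd hk0 (Nat.minFac_dvd k)
  simp only [Finsupp.coe_add, Pi.add_apply]
  omega

lemma exists_incomp {d n : ℕ} (hd1 : 1 < d) (hdvd : d ∣ n) (hne : d ≠ n) (hn : n ≠ 0)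
    (hnpp : ¬ ∃ q i : ℕ, q.Prime ∧ n = q ^ i) :
    ∃ m, m ∣ n ∧ ¬ m ∣ d ∧ ¬ d ∣ m := by
  have hd0 : d ≠ 0 := by omega
  obtain ⟨p, hp, hlt⟩ := aux_lt_factorization hdvd hne hn
  by_cases hq : ∃ q, q.Prime ∧ q ∣ d ∧ q ≠ p
  · obtain ⟨q, hqpr, hqd, hqp⟩ := hq
    refine ⟨p ^ n.factorization p, Nat.ordProj_dvd n p, ?_, ?_⟩
    · intro h
      rw [hp.pow_dvd_iff_le_factorization hd0] at h
      omega
    · intro h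
      exact hqp ((Nat.prime_dvd_prime_iff_eq hqpr hp).mp
        (hqpr.dvd_of_dvd_pow (hqd.trans h)))
  · push_neg at hq
    obtain ⟨q, hqpr, hqn, hqp⟩ := aux_exists_other_prime hn hp hnpp
    refine ⟨q, hqn, ?_, ?_⟩
    · intro h; exact hqp (hq q hqpr h)
    · intro h
      rcases (Nat.Prime.eq_one_or_self_of_dvd hqpr d h) with h1 | h1
      · omega
      · exact hqp (hq q hqpr (h1 ▸ dvd_rfl))

lemma exists_between_aux {e d n : ℕ} (he1 : 1 < e) (hed : e ∣ d) (hne : e ≠ d) (hdn : d ∣ n)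
    (hn : n ≠ 0) (hnpp : ¬ ∃ q i : ℕ, q.Prime ∧ n = q ^ i) :
    ∃ m, m ∣ n ∧ ¬ ((m ∣ e ∨ e ∣ m) ↔ (m ∣ d ∨ d ∣ m)) := by
  have hd0 : d ≠ 0 := by rintro rfl; exact hn (Nat.eq_zero_of_zero_dvd hdn)
  have he0 : e ≠ 0 := by omega
  obtain ⟨p, hp, hlt⟩ := aux_lt_factorization hed hne hd0
  by_cases hq : ∃ q, q.Prime ∧ q ∣ e ∧ q ≠ p
  · obtain ⟨q, hqpr, hqe, hqp⟩ := hq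
    refine ⟨p ^ d.factorization p, (Nat.ordProj_dvd d p).trans hdn, ?_⟩
    have h1 : ¬ p ^ d.factorization p ∣ e := by
      intro h
      rw [hp.pow_dvd_iff_le_factorization he0] at h
      omega
    have h2 : ¬ e ∣ p ^ d.factorization p := by
      intro h
      exact hqp ((Nat.prime_dvd_prime_iff_eq hqpr hp).mp
        (hqpr.dvd_of_dvd_pow (hqe.trans h)))
    have h3 : p ^ d.factorization p ∣ d := Nat.ordProj_dvd d p
    tauto
  · push_neg at hq
    have hpe : p ∣ e := by
      have h := Nat.minFac_dvd e
      have := hq e.minFac (Nat.minFac_prime (by omega)) h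
      rwa [← this]
    by_cases hq2 : ∃ q, q.Prime ∧ q ∣ d ∧ q ≠ p
    · obtain ⟨q, hqpr, hqd, hqp⟩ := hq2
      refine ⟨q, hqd.trans hdn, ?_⟩
      have h1 : ¬ q ∣ e := fun h => hqp (hq q hqpr h)
      have h2 : ¬ e ∣ q := by
        intro h
        exact hqp ((Nat.prime_dvd_prime_iff_eq hp hqpr).mp (hpe.trans h)).symm
      tauto
    · push_neg at hq2
      obtain ⟨q, hqpr, hqn, hqp⟩ := aux_exists_other_prime hn hp hnpp
      have hqe : ¬ q ∣ e := fun h => hqp (hq q hqpr h)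
      have hcop : Nat.Coprime e q := ((hqpr.coprime_iff_not_dvd).mpr hqe).symm
      refine ⟨e * q, hcop.mul_dvd_of_dvd_of_dvd (hed.trans hdn) hqn, ?_⟩
      have h1 : e ∣ e * q := dvd_mul_right e q
      have h2 : ¬ e * q ∣ d := by
        intro h
        exact hqp (hq2 q hqpr ((dvd_mul_left q e).trans h))
      have h3 : ¬ d ∣ e * q := by
        intro h
        have hpq : Nat.Coprime (p ^ d.factorization p) q :=
          Nat.Coprime.pow_left _ ((hp.coprime_iff_not_dvd).mpr
            (fun hdvd => hqp ((Nat.prime_dvd_prime_iff_eq hp hqpr).mp hdvd).symm))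
        have h4 : p ^ d.factorization p ∣ e * q := (Nat.ordProj_dvd d p).trans h
        have h5 : p ^ d.factorization p ∣ e := hpq.dvd_of_dvd_mul_right h4
        rw [hp.pow_dvd_iff_le_factorization he0] at h5
        omega
      tauto

lemma arith_wit {e d n : ℕ} (hn : n ≠ 0)
    (hnpp : ¬ ∃ q i : ℕ, q.Prime ∧ n = q ^ i) (he : e ∣ n) (hd : d ∣ n)
    (hne : e ≠ d) (hnb : ¬ ((e = 1 ∨ e = n) ∧ (d = 1 ∨ d = n))) :
    ∃ m, m ∣ n ∧ ¬ ((m ∣ e ∨ e ∣ m) ↔ (m ∣ d ∨ d ∣ m)) := by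
  have he0 : e ≠ 0 := by rintro rfl; exact hn (Nat.eq_zero_of_zero_dvd he)
  have hd0 : d ≠ 0 := by rintro rfl; exact hn (Nat.eq_zero_of_zero_dvd hd)
  by_cases hcomp : e ∣ d
  · by_cases he1 : e = 1
    · subst he1
      have hdn1 : ¬ (d = 1 ∨ d = n) := fun h => hnb ⟨Or.inl rfl, h⟩
      push_neg at hdn1
      obtain ⟨m, h1, h2, h3⟩ := exists_incomp (d := d) (by omega) hd hdn1.2 hn hnpp
      have h4 : (1:ℕ) ∣ m := one_dvd m
      exact ⟨m, h1, by tauto⟩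
    · exact exists_between_aux (by omega) hcomp hne hd hn hnpp
  · by_cases hcomp2 : d ∣ e
    · by_cases hd1 : d = 1
      · subst hd1
        have hen1 : ¬ (e = 1 ∨ e = n) := fun h => hnb ⟨h, Or.inl rfl⟩
        push_neg at hen1
        obtain ⟨m, h1, h2, h3⟩ := exists_incomp (d := e) (by omega) he hen1.2 hn hnpp
        have h4 : (1:ℕ) ∣ m := one_dvd m
        exact ⟨m, h1, by tauto⟩
      · obtain ⟨m, h1, h2⟩ :=
          exists_between_aux (e := d) (d := e) (by omega) hcomp2 (Ne.symm hne) he hn hnpp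
        exact ⟨m, h1, fun h => h2 h.symm⟩
    · have h0 : e ∣ e := dvd_rfl
      exact ⟨e, he, by tauto⟩

lemma arith_main {e d n : ℕ} (hn : n ≠ 0)
    (hnpp : ¬ ∃ q i : ℕ, q.Prime ∧ n = q ^ i) (he : e ∣ n) (hd : d ∣ n) :
    (∀ m, m ∣ n → ((m ∣ e ∨ e ∣ m) ↔ (m ∣ d ∨ d ∣ m))) ↔
      (e = d ∨ ((e = 1 ∨ e = n) ∧ (d = 1 ∨ d = n))) := by
  constructor
  · intro h
    by_contra hc
    rw [not_or] at hc
    obtain ⟨m, hm1, hm2⟩ := arith_wit hn hnpp he hd hc.1 hc.2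
    exact hm2 (h m hm1)
  · rintro (rfl | ⟨he1, hd1⟩)
    · intro m hm; rfl
    · intro m hm
      have l1 : m ∣ e ∨ e ∣ m := by
        rcases he1 with rfl | rfl
        · exact Or.inr (one_dvd m)
        · exact Or.inl hm
      have l2 : m ∣ d ∨ d ∣ m := by
        rcases hd1 with rfl | rfl
        · exact Or.inr (one_dvd m)
        · exact Or.inl hm
      tauto

end Arith

section Grp

variable {G : Type*} [Group G] [Finite G]

lemma pow_gcd_mem_zpowers (v : G) (b : ℕ) :
    v ^ Nat.gcd (orderOf v) b ∈ Subgroup.zpowers (v ^ b) := by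
  rw [Subgroup.mem_zpowers_iff]
  refine ⟨Nat.gcdB (orderOf v) b, ?_⟩
  have h1 : ((v ^ b : G)) ^ (Nat.gcdB (orderOf v) b) =
      v ^ ((b : ℤ) * Nat.gcdB (orderOf v) b) := by
    rw [← zpow_natCast v b, ← zpow_mul]
  rw [h1, ← zpow_natCast v (Nat.gcd (orderOf v) b)]
  rw [Nat.gcd_eq_gcd_ab (orderOf v) b]
  have h2 : v ^ ((orderOf v : ℤ) * Nat.gcdA (orderOf v) b) = 1 := by
    rw [zpow_mul, zpow_natCast, pow_orderOf_eq_one, one_zpow]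
  rw [zpow_add, h2, one_mul]

lemma mem_zpowers_of_orderOf_dvd {v x y : G} (hx : x ∈ Subgroup.zpowers v)
    (hy : y ∈ Subgroup.zpowers v) (h : orderOf x ∣ orderOf y) :
    x ∈ Subgroup.zpowers y := by
  rw [← mem_powers_iff_mem_zpowers, Submonoid.mem_powers_iff] at hx hy
  obtain ⟨a, rfl⟩ := hx
  obtain ⟨b, rfl⟩ := hy
  rw [orderOf_pow, orderOf_pow] at h
  set n := orderOf v with hn
  have hn0 : n ≠ 0 := (orderOf_pos v).ne'
  have hg1n : Nat.gcd n a ∣ n := Nat.gcd_dvd_left _ _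
  have hg2n : Nat.gcd n b ∣ n := Nat.gcd_dvd_left _ _
  have hgcd : Nat.gcd n b ∣ Nat.gcd n a := by
    have hpos : 0 < n / Nat.gcd n a :=
      Nat.div_pos (Nat.le_of_dvd (Nat.pos_of_ne_zero hn0) hg1n)
        (Nat.gcd_pos_of_pos_left _ (Nat.pos_of_ne_zero hn0))
    have h1 : n / Nat.gcd n a * Nat.gcd n b ∣ n / Nat.gcd n b * Nat.gcd n b :=
      mul_dvd_mul_right h _
    rw [Nat.div_mul_cancel hg2n] at h1
    have h2 : n / Nat.gcd n a * Nat.gcd n b ∣ n / Nat.gcd n a * Nat.gcd n a := by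
      rwa [Nat.div_mul_cancel hg1n]
    exact (mul_dvd_mul_iff_left hpos.ne').mp h2
  obtain ⟨c, hc⟩ := hgcd.trans (Nat.gcd_dvd_right n a)
  rw [hc, pow_mul]
  exact Subgroup.pow_mem _ (pow_gcd_mem_zpowers v b) c

lemma mem_zpowers_iff_orderOf_dvd {v x y : G} (hx : x ∈ Subgroup.zpowers v)
    (hy : y ∈ Subgroup.zpowers v) :
    x ∈ Subgroup.zpowers y ↔ orderOf x ∣ orderOf y :=
  ⟨fun h => orderOf_dvd_of_mem_zpowers h, mem_zpowers_of_orderOf_dvd hx hy⟩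

lemma zpowers_eq_iff {v x y : G} (hx : x ∈ Subgroup.zpowers v)
    (hy : y ∈ Subgroup.zpowers v) :
    Subgroup.zpowers x = Subgroup.zpowers y ↔ orderOf x = orderOf y := by
  constructor
  · intro h
    rw [← Nat.card_zpowers x, ← Nat.card_zpowers y, h]
  · intro h
    exact le_antisymm
      (Subgroup.zpowers_le.mpr (mem_zpowers_of_orderOf_dvd hx hy h.dvd))
      (Subgroup.zpowers_le.mpr (mem_zpowers_of_orderOf_dvd hy hx (dvd_of_eq h.symm)))

lemma exists_mem_orderOf_eq (v : G) {m : ℕ} (hm : m ∣ orderOf v) :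
    ∃ x ∈ Subgroup.zpowers v, orderOf x = m := by
  refine ⟨v ^ (orderOf v / m), Subgroup.pow_mem _ (Subgroup.mem_zpowers v) _, ?_⟩
  rw [orderOf_pow, Nat.gcd_eq_right (Nat.div_dvd_of_dvd hm),
    Nat.div_div_self hm (orderOf_pos v).ne']

lemma closedNbhd_powGraph_eq {v : G} (hcc : IsCCGenerator v) (x : G) :
    x ∈ closedNbhd (powGraph G) v ↔ x ∈ Subgroup.zpowers v := by
  simp only [closedNbhd, Set.mem_insert_iff, SimpleGraph.mem_neighborSet]
  constructor
  · rintro (rfl | ⟨hne, (h | h)⟩)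
    · exact Subgroup.mem_zpowers _
    · exact (hcc x h) ▸ Subgroup.mem_zpowers x
    · exact h
  · intro h
    by_cases hxv : x = v
    · exact Or.inl hxv
    · exact Or.inr ⟨fun he => hxv he.symm, Or.inr h⟩

lemma mem_closedNbhd_powLocal {v u w : G}
    (hu : u ∈ closedNbhd (powGraph G) v) (hw : w ∈ closedNbhd (powGraph G) v) :
    ((⟨w, hw⟩ : closedNbhd (powGraph G) v) ∈
        closedNbhd (powLocal G v) ⟨u, hu⟩) ↔
      (w ∈ Subgroup.zpowers u ∨ u ∈ Subgroup.zpowers w) := by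
  simp only [closedNbhd, Set.mem_insert_iff, SimpleGraph.mem_neighborSet]
  constructor
  · rintro (h | h)
    · have hwu : w = u := congrArg Subtype.val h
      subst hwu
      exact Or.inl (Subgroup.mem_zpowers w)
    · have h' : u ≠ w ∧ (u ∈ Subgroup.zpowers w ∨ w ∈ Subgroup.zpowers u) := h
      exact h'.2.symm
  · intro h
    by_cases hwu : w = u
    · exact Or.inl (Subtype.ext hwu)
    · refine Or.inr ?_
      show (powGraph G).Adj u w
      exact ⟨fun he => hwu he.symm, h.symm⟩

end Grp

/-- Let `v` be a CC-generator whose order is not a prime power and `u ∈ N_Γ[v]`.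
If `u` is the identity or a generator of `⟨v⟩`, the closed-twins of `u` in `Γ_v` are
exactly the identity together with the generators of `⟨v⟩`; otherwise they are exactly
the generators of `⟨u⟩`. -/
theorem closed_twins_in_powLocal_of_ccGenerator
    {G : Type*} [Group G] [Finite G] (v u : G)
    (hcc : IsCCGenerator v)
    (hnpp : ¬ ∃ p i : ℕ, p.Prime ∧ orderOf v = p ^ i)
    (hu : u ∈ closedNbhd (powGraph G) v) :
    ∀ w, ∀ hw : w ∈ closedNbhd (powGraph G) v,
      ((u = 1 ∨ Subgroup.zpowers u = Subgroup.zpowers v) →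
        (closedNbhd (powLocal G v) ⟨w, hw⟩ = closedNbhd (powLocal G v) ⟨u, hu⟩ ↔
          (w = 1 ∨ Subgroup.zpowers w = Subgroup.zpowers v))) ∧
      (¬ (u = 1 ∨ Subgroup.zpowers u = Subgroup.zpowers v) →
        (closedNbhd (powLocal G v) ⟨w, hw⟩ = closedNbhd (powLocal G v) ⟨u, hu⟩ ↔
          Subgroup.zpowers w = Subgroup.zpowers u)) := by
  intro w hw
  have hvS : ∀ x, x ∈ closedNbhd (powGraph G) v ↔ x ∈ Subgroup.zpowers v :=
    fun x => closedNbhd_powGraph_eq hcc x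
  have huv : u ∈ Subgroup.zpowers v := (hvS u).mp hu
  have hwv : w ∈ Subgroup.zpowers v := (hvS w).mp hw
  have hn0 : orderOf v ≠ 0 := (orderOf_pos v).ne'
  have hd : orderOf u ∣ orderOf v := orderOf_dvd_of_mem_zpowers huv
  have he : orderOf w ∣ orderOf v := orderOf_dvd_of_mem_zpowers hwv
  have htwin : (closedNbhd (powLocal G v) ⟨w, hw⟩ = closedNbhd (powLocal G v) ⟨u, hu⟩) ↔
      (∀ m, m ∣ orderOf v →
        ((m ∣ orderOf w ∨ orderOf w ∣ m) ↔ (m ∣ orderOf u ∨ orderOf u ∣ m))) := by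
    rw [Set.ext_iff]
    constructor
    · intro h m hm
      obtain ⟨x, hxv, hxo⟩ := exists_mem_orderOf_eq v hm
      have hxS : x ∈ closedNbhd (powGraph G) v := (hvS x).mpr hxv
      have h2 := h ⟨x, hxS⟩
      rw [mem_closedNbhd_powLocal hw hxS, mem_closedNbhd_powLocal hu hxS,
        mem_zpowers_iff_orderOf_dvd hxv hwv, mem_zpowers_iff_orderOf_dvd hwv hxv,
        mem_zpowers_iff_orderOf_dvd hxv huv, mem_zpowers_iff_orderOf_dvd huv hxv] at h2
      rw [← hxo]
      exact h2
    · intro h y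
      rcases y with ⟨x, hxS⟩
      have hxv : x ∈ Subgroup.zpowers v := (hvS x).mp hxS
      rw [mem_closedNbhd_powLocal hw hxS, mem_closedNbhd_powLocal hu hxS,
        mem_zpowers_iff_orderOf_dvd hxv hwv, mem_zpowers_iff_orderOf_dvd hwv hxv,
        mem_zpowers_iff_orderOf_dvd hxv huv, mem_zpowers_iff_orderOf_dvd huv hxv]
      exact h (orderOf x) (orderOf_dvd_of_mem_zpowers hxv)
  have hcond_u : (u = 1 ∨ Subgroup.zpowers u = Subgroup.zpowers v) ↔
      (orderOf u = 1 ∨ orderOf u = orderOf v) := by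
    rw [← orderOf_eq_one_iff, zpowers_eq_iff huv (Subgroup.mem_zpowers v)]
  have hcond_w : (w = 1 ∨ Subgroup.zpowers w = Subgroup.zpowers v) ↔
      (orderOf w = 1 ∨ orderOf w = orderOf v) := by
    rw [← orderOf_eq_one_iff, zpowers_eq_iff hwv (Subgroup.mem_zpowers v)]
  have hzw : Subgroup.zpowers w = Subgroup.zpowers u ↔ orderOf w = orderOf u :=
    zpowers_eq_iff hwv huv
  constructor
  · intro hue
    rw [htwin, arith_main hn0 hnpp he hd, hcond_w]
    have hd' : orderOf u = 1 ∨ orderOf u = orderOf v := hcond_u.mp hue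
    constructor
    · rintro (heq | ⟨h1, h2⟩)
      · rw [heq]; exact hd'
      · exact h1
    · intro h1
      exact Or.inr ⟨h1, hd'⟩
  · intro hue
    rw [htwin, arith_main hn0 hnpp he hd, hzw]
    have hd' : ¬ (orderOf u = 1 ∨ orderOf u = orderOf v) := fun h => hue (hcond_u.mpr h)
    constructor
    · rintro (heq | ⟨h1, h2⟩)
      · exact heq
      · exact absurd h2 hd'
    · exact Or.inl
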